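/- For every Gallai coloring c of a complete graph G with at least 2 vertices, the vertex set V(G) can be partitioned into nonempty sets V_1, ..., V_p with p ≥ 2 such that: (a) at most two colors appear on edges joining vertices in different parts, and (b) for each pair of distinct parts V_i, V_j, all edges between V_i and V_j receive the same color. -/

import Mathlib

/-- A Gallai coloring: a symmetric edge-coloring of a complete graph with no
rainbow triangle (no triangle whose three edges get three distinct colors). -/
def IsGallai {V C : Type*} (c : V → V → C) : Prop :=
  (∀ u v, c u v = c v u) ∧
  ∀ u v w : V, u ≠ v → v ≠ w → u ≠ w →
    (c u v = c v w ∨ c v w = c u w ∨ c u v = c u w)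

/-- The coloring `c` contains a cycle on `m` vertices all of whose edges have color `col`. -/
def HasCycleColor {V C : Type*} (c : V → V → C) (m : ℕ) (col : C) : Prop :=
  ∃ f : ZMod m → V, Function.Injective f ∧ ∀ i : ZMod m, c (f i) (f (i + 1)) = col

/-- The coloring `c` contains a monochromatic cycle on `m` vertices. -/
def HasMonoCycle {V C : Type*} (c : V → V → C) (m : ℕ) : Prop :=
  ∃ col : C, HasCycleColor c m col

open Relation Set

set_option maxHeartbeats 1000000

/-- Auxiliary: edge relation of a single color class. -/
def GRel {V C : Type*} (c : V → V → C) (γ : C) (x y : V) : Prop := x ≠ y ∧ c x y = γ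

/-- Auxiliary: a color class is spanning connected. -/
def GSpan {V C : Type*} (c : V → V → C) (γ : C) : Prop :=
  ∀ x y : V, ReflTransGen (GRel c γ) x y

/-- Auxiliary: the conclusion of Gallai's theorem. -/
def GGP {V C : Type*} (c : V → V → C) : Prop :=
  ∃ (p : ℕ) (parts : Fin p → Set V) (col : Fin p → Fin p → C) (c1 c2 : C),
    2 ≤ p ∧
    (∀ i, (parts i).Nonempty) ∧
    (∀ i j, i ≠ j → Disjoint (parts i) (parts j)) ∧
    (⋃ i, parts i) = Set.univ ∧
    (∀ i j, i ≠ j → ∀ u ∈ parts i, ∀ v ∈ parts j, c u v = col i j) ∧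
    (∀ i j, i ≠ j → col i j = c1 ∨ col i j = c2)

lemma grel_symm {V C : Type*} {c : V → V → C} (hc : IsGallai c) (γ : C) :
    Symmetric (GRel c γ) := fun x y h => ⟨h.1.symm, (hc.1 y x).trans h.2⟩

/-- Every color component is a module. -/
lemma comp_module {V C : Type*} {c : V → V → C} (hc : IsGallai c) {γ : C} {a z : V}
    (hz : ¬ ReflTransGen (GRel c γ) a z) :
    ∀ {u : V}, ReflTransGen (GRel c γ) a u → c u z = c a z := by
  intro u hu
  induction hu with
  | refl => rfl
  | @tail b t hb hbt ih =>
    have htX : ReflTransGen (GRel c γ) a t := hb.tail hbt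
    have hzb : z ≠ b := fun h => hz (h ▸ hb)
    have hzt : z ≠ t := fun h => hz (h ▸ htX)
    have hbz : c b z ≠ γ := fun h => hz (hb.tail ⟨hzb.symm, h⟩)
    have htz : c t z ≠ γ := fun h => hz (htX.tail ⟨hzt.symm, h⟩)
    rcases hc.2 b t z hbt.1 hzt.symm hzb.symm with h | h | h
    · exact absurd (h.symm.trans hbt.2) htz
    · exact h.trans ih
    · exact absurd (h.symm.trans hbt.2) hbz

/-- If a color is used, either its component structure is nontrivial or it is
spanning connected. -/
lemma comp_or {V C : Type*} {c : V → V → C} (hc : IsGallai c) {γ : C}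
    (h : ∃ x y : V, x ≠ y ∧ c x y = γ) :
    (∃ a z : V, (∃ b0, GRel c γ a b0) ∧ ¬ ReflTransGen (GRel c γ) a z) ∨ GSpan c γ := by
  obtain ⟨x, y, hxy, hcxy⟩ := h
  by_cases hall : ∀ t, ReflTransGen (GRel c γ) x t
  · right
    intro s t
    haveI : Std.Symm (GRel c γ) := ⟨fun a b h => grel_symm hc γ h⟩
    exact ((ReflTransGen.stdSymm (r := GRel c γ)).symm _ _ (hall s)).trans (hall t)
  · left
    push_neg at hall
    obtain ⟨z, hz⟩ := hall
    exact ⟨x, z, ⟨y, hxy, hcxy⟩, hz⟩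

/-- Two colors suffice: the singleton partition works. -/
lemma GGP_of_two_colors {V C : Type*} [Fintype V] (c : V → V → C)
    (h2 : 2 ≤ Fintype.card V) (c1 c2 : C)
    (hcol : ∀ x y : V, x ≠ y → c x y = c1 ∨ c x y = c2) : GGP c := by
  classical
  let e := (Fintype.equivFin V).symm
  refine ⟨Fintype.card V, fun i => {e i}, fun i j => c (e i) (e j), c1, c2, h2,
    fun i => ⟨e i, rfl⟩, ?_, ?_, ?_, ?_⟩
  · intro i j hij
    simpa [Set.disjoint_singleton] using (e.injective.ne hij)
  · ext x
    simp only [Set.mem_iUnion, Set.mem_singleton_iff, Set.mem_univ, iff_true]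
    exact ⟨e.symm x, by simp [e]⟩
  · intro i j hij u hu w hw
    rw [Set.mem_singleton_iff] at hu hw
    rw [hu, hw]
  · intro i j hij
    exact hcol _ _ (e.injective.ne hij)

/-- Helper: among three pairwise distinct elements one avoids both `r` and `b`. -/
lemma three_avoid {C : Type*} {r b x y z : C} (hxy : x ≠ y) (hxz : x ≠ z) (hyz : y ≠ z) :
    (x ≠ r ∧ x ≠ b) ∨ (y ≠ r ∧ y ≠ b) ∨ (z ≠ r ∧ z ≠ b) := by
  by_cases hx : x ≠ r ∧ x ≠ b
  · exact Or.inl hx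
  by_cases hy : y ≠ r ∧ y ≠ b
  · exact Or.inr (Or.inl hy)
  by_cases hz : z ≠ r ∧ z ≠ b
  · exact Or.inr (Or.inr hz)
  exfalso
  rw [not_and_or, not_not, not_not] at hx hy hz
  rcases hx with rfl | rfl <;> rcases hy with rfl | rfl <;> rcases hz with rfl | rfl <;>
    simp_all

/-- The key contradiction: three distinct spanning connected colors are impossible,
given a Gallai partition of `V \ {v}`. -/
lemma Zcore {V C : Type*} {c : V → V → C} (hc : IsGallai c) (v : V)
    (q : ℕ) (P : Fin q → Set V) (col : Fin q → Fin q → C) (r b : C)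
    (hq : 2 ≤ q) (hne : ∀ i, (P i).Nonempty)
    (hdisj : ∀ i j, i ≠ j → Disjoint (P i) (P j))
    (hcover : (⋃ i, P i) = {x : V | x ≠ v})
    (hmono : ∀ i j, i ≠ j → ∀ u ∈ P i, ∀ w ∈ P j, c u w = col i j)
    (hcol2 : ∀ i j, i ≠ j → col i j = r ∨ col i j = b)
    (g h1 h2 : C) (hg1 : g ≠ h1) (hg2 : g ≠ h2) (h12 : h1 ≠ h2)
    (hgr : g ≠ r) (hgb : g ≠ b)
    (sg : GSpan c g) (sh1 : GSpan c h1) (sh2 : GSpan c h2) : False := by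
  classical
  haveI : Nontrivial (Fin q) := by
    rw [← Fintype.one_lt_card_iff_nontrivial, Fintype.card_fin]; omega
  have memP : ∀ x : V, x ≠ v → ∃ i, x ∈ P i := by
    intro x hx
    have : x ∈ ⋃ i, P i := by rw [hcover]; exact hx
    exact Set.mem_iUnion.1 this
  have notv : ∀ (i : Fin q) (x : V), x ∈ P i → x ≠ v := by
    intro i x hx
    have : x ∈ ⋃ i, P i := Set.mem_iUnion.2 ⟨i, hx⟩
    rw [hcover] at this
    exact this
  -- every part contains a g-neighbor of v
  have S1 : ∀ i : Fin q, ∃ x, x ∈ P i ∧ c v x = g := by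
    intro i
    obtain ⟨w, hw⟩ := hne i
    obtain ⟨j, hj⟩ := exists_ne i
    obtain ⟨w', hw'⟩ := hne j
    have key : ∀ t, ReflTransGen (GRel c g) w t → (t ∈ P i ∨ ∃ x, x ∈ P i ∧ c v x = g) := by
      intro t ht
      induction ht with
      | refl => exact Or.inl hw
      | @tail bb tt hbb hstep ih =>
        rcases ih with hbPi | hres
        · by_cases htv : tt = v
          · exact Or.inr ⟨bb, hbPi, (hc.1 v bb).trans (htv ▸ hstep.2)⟩
          · obtain ⟨k, hk⟩ := memP tt htv
            by_cases hki : k = i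
            · exact Or.inl (hki ▸ hk)
            · have hik : i ≠ k := fun h => hki h.symm
              have hgik : col i k = g :=
                (hmono i k hik bb hbPi tt hk).symm.trans hstep.2
              rcases hcol2 i k hik with h | h
              · exact absurd (hgik.symm.trans h) hgr
              · exact absurd (hgik.symm.trans h) hgb
        · exact Or.inr hres
    rcases key w' (sg w w') with h | h
    · exact absurd h (Set.disjoint_left.1 (hdisj j i hj) hw')
    · exact h
  -- v has an edge of each spanning color
  have S2 : ∀ γ : C, GSpan c γ → ∃ u, u ≠ v ∧ c v u = γ := by
    intro γ s
    have h0q : 0 < q := by omega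
    obtain ⟨w0, hw0⟩ := hne ⟨0, h0q⟩
    have hw0v := notv _ _ hw0
    have key : ∀ t, ReflTransGen (GRel c γ) v t → (t = v ∨ ∃ u, u ≠ v ∧ c v u = γ) := by
      intro t ht
      induction ht with
      | refl => exact Or.inl rfl
      | @tail bb tt hbb hstep ih =>
        rcases ih with rfl | hres
        · exact Or.inr ⟨tt, Ne.symm hstep.1, hstep.2⟩
        · exact Or.inr hres
    rcases key w0 (s v w0) with h | h
    · exact absurd h hw0v
    · exact h
  -- the cross color to the part containing an h'-neighbor of v must be h'
  have key2 : ∀ h' : C, h' ≠ g → ∀ (y : V) (Q : Fin q), y ∈ P Q → c v y = h' →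
      ∀ Pd : Fin q, Pd ≠ Q → col Pd Q = h' := by
    intro h' hne' y Q hyQ hvy Pd hPdQ
    obtain ⟨x, hxP, hvx⟩ := S1 Pd
    have hxy : x ≠ y := fun h => hne' (hvy.symm.trans (h ▸ hvx))
    have hvx' : v ≠ x := Ne.symm (notv _ _ hxP)
    have hvy' : v ≠ y := Ne.symm (notv _ _ hyQ)
    have hcxy : c x y = col Pd Q := hmono Pd Q hPdQ x hxP y hyQ
    rcases hc.2 v x y hvx' hxy hvy' with h | h | h
    · have hg' : g = col Pd Q := (hvx.symm.trans h).trans hcxy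
      rcases hcol2 Pd Q hPdQ with h' | h'
      · exact absurd (hg'.trans h') hgr
      · exact absurd (hg'.trans h') hgb
    · exact hcxy.symm.trans (h.trans hvy)
    · exact absurd ((hvx.symm.trans h).trans hvy).symm hne'
  have colsymm : ∀ i j : Fin q, i ≠ j → col i j = col j i := by
    intro i j hij
    obtain ⟨u, hu⟩ := hne i
    obtain ⟨w, hw⟩ := hne j
    exact (hmono i j hij u hu w hw).symm.trans
      ((hc.1 u w).trans (hmono j i hij.symm w hw u hu))
  obtain ⟨y1, hy1v, hvy1⟩ := S2 h1 sh1
  obtain ⟨Q1, hQ1⟩ := memP y1 hy1v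
  obtain ⟨y2, hy2v, hvy2⟩ := S2 h2 sh2
  obtain ⟨Q2, hQ2⟩ := memP y2 hy2v
  by_cases hQ : Q1 = Q2
  · subst hQ
    obtain ⟨Pd, hPd⟩ := exists_ne Q1
    have e1 := key2 h1 (Ne.symm hg1) y1 Q1 hQ1 hvy1 Pd hPd
    have e2 := key2 h2 (Ne.symm hg2) y2 Q1 hQ2 hvy2 Pd hPd
    exact h12 (e1.symm.trans e2)
  · have e1 := key2 h1 (Ne.symm hg1) y1 Q1 hQ1 hvy1 Q2 (Ne.symm hQ)
    have e2 := key2 h2 (Ne.symm hg2) y2 Q2 hQ2 hvy2 Q1 hQ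
    exact h12 (e1.symm.trans ((colsymm Q1 Q2 hQ).symm.trans e2))

theorem gallai_aux : ∀ (n : ℕ) {V C : Type*} [Fintype V] (c : V → V → C),
    IsGallai c → Fintype.card V = n → 2 ≤ Fintype.card V → GGP c := by
  intro n
  induction n using Nat.strong_induction_on with
  | _ n IH =>
  intro V C instV c hc hcard h2
  classical
  -- contraction of a nontrivial color component
  have contract : ∀ (γ : C) (a bb z : V), GRel c γ a bb →
      ¬ ReflTransGen (GRel c γ) a z → GGP c := by
    intro γ a bb z hab hz
    set X : Set V := {x | ReflTransGen (GRel c γ) a x} with hX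
    have haX : a ∈ X := ReflTransGen.refl
    have hbX : bb ∈ X := ReflTransGen.single hab
    have hzX : z ∉ X := hz
    set S : Set V := {x | x ∉ X ∨ x = a} with hS
    have haS : a ∈ S := Or.inr rfl
    have hzS : z ∈ S := Or.inl hzX
    have hbS : bb ∉ S := by
      rintro (h | h)
      · exact h hbX
      · exact hab.1 h.symm
    have hza : z ≠ a := fun h => hzX (h ▸ haX)
    have hcardlt : Fintype.card S < Fintype.card V :=
      Fintype.card_subtype_lt (x := bb) hbS
    haveI : Nontrivial S :=
      ⟨⟨⟨a, haS⟩, ⟨z, hzS⟩, fun h => hza (congrArg Subtype.val h).symm⟩⟩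
    have hge2 : 2 ≤ Fintype.card S := Fintype.one_lt_card_iff_nontrivial.2 this
    set c' : S → S → C := fun u w => c u.1 w.1 with hc'def
    have hc' : IsGallai c' := by
      constructor
      · intro u w; exact hc.1 u.1 w.1
      · intro u w t huw hwt hut
        exact hc.2 u.1 w.1 t.1 (fun h => huw (Subtype.ext h))
          (fun h => hwt (Subtype.ext h)) (fun h => hut (Subtype.ext h))
    obtain ⟨p, parts, col, c1, c2, hp, hne', hdisj', hcover', hmono', hcol'⟩ :=
      IH (Fintype.card S) (hcard ▸ hcardlt) c' hc' rfl hge2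
    have hSX : ∀ u : S, (u : V) ∈ X → u = ⟨a, haS⟩ := by
      intro u hu
      rcases u.2 with h | h
      · exact absurd hu h
      · exact Subtype.ext h
    have hmod : ∀ {x w : V}, x ∈ X → w ∉ X → c x w = c a w :=
      fun hx hw => comp_module hc hw hx
    refine ⟨p, fun i => (Subtype.val '' parts i) ∪ {x | x ∈ X ∧ (⟨a, haS⟩ : S) ∈ parts i},
      col, c1, c2, hp, ?_, ?_, ?_, ?_, hcol'⟩
    · intro i
      obtain ⟨u, hu⟩ := hne' i
      exact ⟨u.1, Or.inl ⟨u, hu, rfl⟩⟩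
    · intro i j hij
      rw [Set.disjoint_left]
      rintro x (⟨u, hu, rfl⟩ | ⟨hxX, hai⟩) (⟨w, hw, hwv⟩ | ⟨hxX', haj⟩)
      · have hwu : w = u := Subtype.ext hwv
        rw [hwu] at hw
        exact Set.disjoint_left.1 (hdisj' i j hij) hu hw
      · have hua : u = ⟨a, haS⟩ := hSX u hxX'
        rw [hua] at hu
        exact Set.disjoint_left.1 (hdisj' i j hij) hu haj
      · have hwX : (w : V) ∈ X := by rw [hwv]; exact hxX
        have hwa : w = ⟨a, haS⟩ := hSX w hwX
        rw [hwa] at hw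
        exact Set.disjoint_left.1 (hdisj' i j hij) hai hw
      · exact Set.disjoint_left.1 (hdisj' i j hij) hai haj
    · ext x
      simp only [Set.mem_iUnion, Set.mem_univ, iff_true]
      by_cases hxX : x ∈ X
      · have : (⟨a, haS⟩ : S) ∈ ⋃ i, parts i := by rw [hcover']; trivial
        obtain ⟨i0, hi0⟩ := Set.mem_iUnion.1 this
        exact ⟨i0, Or.inr ⟨hxX, hi0⟩⟩
      · have hxS : x ∈ S := Or.inl hxX
        have : (⟨x, hxS⟩ : S) ∈ ⋃ i, parts i := by rw [hcover']; trivial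
        obtain ⟨i0, hi0⟩ := Set.mem_iUnion.1 this
        exact ⟨i0, Or.inl ⟨⟨x, hxS⟩, hi0, rfl⟩⟩
    · rintro i j hij u (⟨u', hu', rfl⟩ | ⟨huX, hai⟩) w (⟨w', hw', rfl⟩ | ⟨hwX, haj⟩)
      · exact hmono' i j hij u' hu' w' hw'
      · have hu'X : (u' : V) ∉ X := by
          intro h
          have hua : u' = ⟨a, haS⟩ := hSX u' h
          rw [hua] at hu'
          exact Set.disjoint_left.1 (hdisj' i j hij) hu' haj
        calc c u'.1 w = c w u'.1 := hc.1 _ _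
          _ = c a u'.1 := hmod hwX hu'X
          _ = c u'.1 a := hc.1 _ _
          _ = col i j := hmono' i j hij u' hu' ⟨a, haS⟩ haj
      · have hw'X : (w' : V) ∉ X := by
          intro h
          have hwa : w' = ⟨a, haS⟩ := hSX w' h
          rw [hwa] at hw'
          exact Set.disjoint_left.1 (hdisj' i j hij) hai hw'
        calc c u w'.1 = c a w'.1 := hmod huX hw'X
          _ = col i j := hmono' i j hij ⟨a, haS⟩ hai w' hw'
      · exact absurd haj (Set.disjoint_left.1 (hdisj' i j hij) hai)
  -- main case split : at most two colors, or three used colors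
  by_cases h3 : ∃ g1 g2 g3 : C, g1 ≠ g2 ∧ g1 ≠ g3 ∧ g2 ≠ g3 ∧
      (∃ x y : V, x ≠ y ∧ c x y = g1) ∧ (∃ x y : V, x ≠ y ∧ c x y = g2) ∧
      (∃ x y : V, x ≠ y ∧ c x y = g3)
  · obtain ⟨g1, g2, g3, h12, h13, h23, u1, u2, u3⟩ := h3
    rcases comp_or hc u1 with ⟨a, z, ⟨b0, hab⟩, hz⟩ | s1
    · exact contract g1 a b0 z hab hz
    rcases comp_or hc u2 with ⟨a, z, ⟨b0, hab⟩, hz⟩ | s2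
    · exact contract g2 a b0 z hab hz
    rcases comp_or hc u3 with ⟨a, z, ⟨b0, hab⟩, hz⟩ | s3
    · exact contract g3 a b0 z hab hz
    -- all three spanning connected: contradiction
    exfalso
    obtain ⟨ax, ay, haxy, hcax⟩ := u1
    obtain ⟨bx, by', hbxy, hcbx⟩ := u2
    have hcard3 : 2 < Fintype.card V := by
      rw [Fintype.two_lt_card_iff]
      by_cases hb1 : bx ≠ ax ∧ bx ≠ ay
      · exact ⟨ax, ay, bx, haxy, Ne.symm hb1.1, Ne.symm hb1.2⟩
      by_cases hb2 : by' ≠ ax ∧ by' ≠ ay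
      · exact ⟨ax, ay, by', haxy, Ne.symm hb2.1, Ne.symm hb2.2⟩
      exfalso
      rw [not_and_or, not_not, not_not] at hb1 hb2
      rcases hb1 with h1 | h1 <;> rcases hb2 with h2 | h2
      · exact hbxy (h1.trans h2.symm)
      · rw [h1, h2] at hcbx
        exact h12 (hcax.symm.trans hcbx)
      · rw [h1, h2] at hcbx
        exact h12 (hcax.symm.trans ((hc.1 ax ay).trans hcbx))
      · exact hbxy (h1.trans h2.symm)
    -- pick a vertex v and partition V \ {v}
    have hposV : 0 < Fintype.card V := by omega
    obtain ⟨v⟩ : Nonempty V := Fintype.card_pos_iff.1 hposV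
    obtain ⟨s0, t0, w0, hst, hsw, htw⟩ := Fintype.two_lt_card_iff.1 hcard3
    obtain ⟨s, t, hs, ht, hst'⟩ : ∃ s t : V, s ≠ v ∧ t ≠ v ∧ s ≠ t := by
      by_cases hsv : s0 = v
      · exact ⟨t0, w0, Ne.symm (hsv ▸ hst), Ne.symm (hsv ▸ hsw), htw⟩
      by_cases htv : t0 = v
      · exact ⟨s0, w0, hsv, Ne.symm (htv ▸ htw), hsw⟩
      exact ⟨s0, t0, hsv, htv, hst⟩
    have hvS : v ∉ ({x : V | x ≠ v} : Set V) := fun h => h rfl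
    have hltT : Fintype.card ({x : V | x ≠ v} : Set V) < Fintype.card V :=
      Fintype.card_subtype_lt (x := v) hvS
    haveI : Nontrivial ({x : V | x ≠ v} : Set V) :=
      ⟨⟨⟨s, hs⟩, ⟨t, ht⟩, fun h => hst' (congrArg Subtype.val h)⟩⟩
    have hge2T : 2 ≤ Fintype.card ({x : V | x ≠ v} : Set V) :=
      Fintype.one_lt_card_iff_nontrivial.2 this
    set c'' : ({x : V | x ≠ v} : Set V) → ({x : V | x ≠ v} : Set V) → C := fun x y => c x.1 y.1 with hc''def
    have hc'' : IsGallai c'' := by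
      constructor
      · intro u w; exact hc.1 u.1 w.1
      · intro u w t huw hwt hut
        exact hc.2 u.1 w.1 t.1 (fun h => huw (Subtype.ext h))
          (fun h => hwt (Subtype.ext h)) (fun h => hut (Subtype.ext h))
    obtain ⟨q, parts, col, r, b, hq, hne', hdisj', hcover', hmono', hcol'⟩ :=
      IH (Fintype.card ({x : V | x ≠ v} : Set V)) (hcard ▸ hltT) c'' hc'' rfl hge2T
    set P : Fin q → Set V := fun i => Subtype.val '' parts i with hPdef
    have hneP : ∀ i, (P i).Nonempty := by
      intro i
      obtain ⟨u, hu⟩ := hne' i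
      exact ⟨u.1, u, hu, rfl⟩
    have hdisjP : ∀ i j, i ≠ j → Disjoint (P i) (P j) := by
      intro i j hij
      rw [Set.disjoint_left]
      rintro x ⟨u, hu, rfl⟩ ⟨w, hw, hwv⟩
      have hwu : w = u := Subtype.ext hwv
      rw [hwu] at hw
      exact Set.disjoint_left.1 (hdisj' i j hij) hu hw
    have hcoverP : (⋃ i, P i) = ({x : V | x ≠ v} : Set V) := by
      ext x
      simp only [Set.mem_iUnion]
      constructor
      · rintro ⟨i, u, hu, rfl⟩
        exact u.2
      · intro hx
        have : (⟨x, hx⟩ : ({x : V | x ≠ v} : Set V)) ∈ ⋃ i, parts i := by rw [hcover']; trivial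
        obtain ⟨i, hi⟩ := Set.mem_iUnion.1 this
        exact ⟨i, ⟨x, hx⟩, hi, rfl⟩
    have hmonoP : ∀ i j, i ≠ j → ∀ u ∈ P i, ∀ w ∈ P j, c u w = col i j := by
      rintro i j hij u ⟨u', hu', rfl⟩ w ⟨w', hw', rfl⟩
      exact hmono' i j hij u' hu' w' hw'
    rcases three_avoid (r := r) (b := b) h12 h13 h23 with ⟨e1, e2⟩ | ⟨e1, e2⟩ | ⟨e1, e2⟩
    · exact Zcore hc v q P col r b hq hneP hdisjP hcoverP hmonoP hcol'
        g1 g2 g3 h12 h13 h23 e1 e2 s1 s2 s3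
    · exact Zcore hc v q P col r b hq hneP hdisjP hcoverP hmonoP hcol'
        g2 g1 g3 (Ne.symm h12) h23 h13 e1 e2 s2 s1 s3
    · exact Zcore hc v q P col r b hq hneP hdisjP hcoverP hmonoP hcol'
        g3 g1 g2 (Ne.symm h13) (Ne.symm h23) h12 e1 e2 s3 s1 s2
  · -- at most two colors
    have h1V : 1 < Fintype.card V := by omega
    obtain ⟨x0, y0, hxy0⟩ := Fintype.exists_pair_of_one_lt_card h1V
    by_cases hsecond : ∃ x y : V, x ≠ y ∧ c x y ≠ c x0 y0
    · obtain ⟨x1, y1, hxy1, hne1⟩ := hsecond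
      apply GGP_of_two_colors c h2 (c x0 y0) (c x1 y1)
      intro x y hxy
      by_contra hcon
      push_neg at hcon
      exact h3 ⟨c x0 y0, c x1 y1, c x y, Ne.symm hne1, Ne.symm hcon.1, Ne.symm hcon.2,
        ⟨x0, y0, hxy0, rfl⟩, ⟨x1, y1, hxy1, rfl⟩, ⟨x, y, hxy, rfl⟩⟩
    · push_neg at hsecond
      exact GGP_of_two_colors c h2 (c x0 y0) (c x0 y0)
        (fun x y h => Or.inl (hsecond x y h))

theorem gallai_partition {V C : Type*} [Fintype V] (c : V → V → C) (hc : IsGallai c)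
    (hV : 2 ≤ Fintype.card V) :
    ∃ (p : ℕ) (parts : Fin p → Set V) (col : Fin p → Fin p → C) (c1 c2 : C),
      2 ≤ p ∧
      (∀ i, (parts i).Nonempty) ∧
      (∀ i j, i ≠ j → Disjoint (parts i) (parts j)) ∧
      (⋃ i, parts i) = Set.univ ∧
      (∀ i j, i ≠ j → ∀ u ∈ parts i, ∀ v ∈ parts j, c u v = col i j) ∧
      (∀ i j, i ≠ j → col i j = c1 ∨ col i j = c2) := by
  have h := gallai_aux (Fintype.card V) c hc rfl hV
  unfold GGP at h
  exact h
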